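/- There is a constant C > 0 such that for all n, all bounds 0 < L ≤ U with R = U/L, every initial solution x ∈ {0,1}^n, and every adversary strategy (changing at most one processing time per iteration), the expected number of iterations of RLS until the current solution x satisfies d(x) ≤ U is at most C · n · (1 + min{log n, log R}). -/

import Mathlib

open scoped BigOperators ENNReal

namespace MakespanDyn

/-- Load of machine `b` (machine `M₁` corresponds to `b = false`, `M₂` to `b = true`). -/
def load {n : ℕ} (p : Fin n → ℝ) (x : Fin n → Bool) (b : Bool) : ℝ :=
  ∑ i, if x i = b then p i else 0

/-- The makespan of the solution `x` under processing times `p`. -/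
def mspan {n : ℕ} (p : Fin n → ℝ) (x : Fin n → Bool) : ℝ :=
  max (load p x false) (load p x true)

/-- The discrepancy of the solution `x` under processing times `p`. -/
def disc {n : ℕ} (p : Fin n → ℝ) (x : Fin n → Bool) : ℝ :=
  |load p x false - load p x true|

/-- Flip bit `i` of `x`. -/
def flip {n : ℕ} (x : Fin n → Bool) (i : Fin n) : Fin n → Bool :=
  Function.update x i (!(x i))

/-- One iteration of RLS with processing times `p`: flip one uniformly random bit
and accept iff the makespan does not increase. -/
noncomputable def rlsStep {n : ℕ} (hn : 0 < n) (p : Fin n → ℝ) (x : Fin n → Bool) :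
    PMF (Fin n → Bool) :=
  haveI : Nonempty (Fin n) := Fin.pos_iff_nonempty.mp hn
  (PMF.uniformOfFintype (Fin n)).map fun i =>
    if mspan p (flip x i) ≤ mspan p x then flip x i else x

/-- The distribution of the mutation mask of the (1+1) EA: every bit is set
independently with probability `1/n`. -/
noncomputable def maskPMF (n : ℕ) (hn : 0 < n) : PMF (Fin n → Bool) :=
  ⟨fun m => ∏ i, (if m i then (n : ℝ≥0∞)⁻¹ else 1 - (n : ℝ≥0∞)⁻¹), by
    classical
    have hinv : (n : ℝ≥0∞)⁻¹ ≤ 1 := ENNReal.inv_le_one.mpr (by exact_mod_cast hn)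
    have hsum :
        ∑ m : Fin n → Bool, ∏ i, (if m i then (n : ℝ≥0∞)⁻¹ else 1 - (n : ℝ≥0∞)⁻¹) = 1 := by
      rw [← Fintype.piFinset_univ, ← Finset.prod_univ_sum
        (fun _ : Fin n => (Finset.univ : Finset Bool))
        (fun _ b => if b then (n : ℝ≥0∞)⁻¹ else 1 - (n : ℝ≥0∞)⁻¹)]
      have key : (n : ℝ≥0∞)⁻¹ + (1 - (n : ℝ≥0∞)⁻¹) = 1 := add_tsub_cancel_of_le hinv
      simp [key]
    have := hasSum_fintype
      (fun m : Fin n → Bool => ∏ i, (if m i then (n : ℝ≥0∞)⁻¹ else 1 - (n : ℝ≥0∞)⁻¹))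
    rwa [hsum] at this⟩

/-- One iteration of the (1+1) EA with processing times `p`: flip every bit
independently with probability `1/n` and accept iff the makespan does not increase. -/
noncomputable def eaStep {n : ℕ} (hn : 0 < n) (p : Fin n → ℝ) (x : Fin n → Bool) :
    PMF (Fin n → Bool) :=
  (maskPMF n hn).map fun m =>
    let y : Fin n → Bool := fun i => xor (m i) (x i)
    if mspan p y ≤ mspan p x then y else x

/-- A configuration: a solution together with the current processing times. -/
abbrev Cfg (n : ℕ) := (Fin n → Bool) × (Fin n → ℝ)

/-- The run of an algorithm given by `step` with an adversary `adv`, which may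
change the processing times (as an arbitrary function of the history) before each
iteration.  `run step adv init t` is the distribution of the history (most recent
configuration first) after `t` iterations. -/
noncomputable def run {n : ℕ} (step : (Fin n → ℝ) → (Fin n → Bool) → PMF (Fin n → Bool))
    (adv : List (Cfg n) → (Fin n → ℝ)) (init : Cfg n) : ℕ → PMF (List (Cfg n))
  | 0 => PMF.pure [init]
  | t + 1 =>
      (run step adv init t).bind fun h =>
        (step (adv h) h.headI.1).map fun x' => (x', adv h) :: h

/-- The expected number of iterations until a configuration satisfying `good` occurs,
computed as `∑_{t ≥ 0} Pr(T > t)` where `T > t` iff no configuration in the history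
after `t` iterations is good. -/
noncomputable def expectedHittingTime {σ : Type*} (runs : ℕ → PMF (List σ))
    (good : σ → Prop) : ℝ≥0∞ :=
  ∑' t, (runs t).toOuterMeasure {h | ∀ c ∈ h, ¬ good c}



/-! ### Auxiliary material for the proof -/

section Aux

open Finset

variable {n : ℕ}

/-- The fuller machine (`M₂` in case of a tie broken towards `false`). -/
noncomputable def chooseB (p : Fin n → ℝ) (x : Fin n → Bool) : Bool :=
  if load p x false < load p x true then true else false

/-- The number of jobs on the fuller machine. -/
noncomputable def kk (p : Fin n → ℝ) (x : Fin n → Bool) : ℕ :=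
  (Finset.univ.filter fun i => x i = chooseB p x).card

lemma load_filter (p : Fin n → ℝ) (x : Fin n → Bool) (b : Bool) :
    load p x b = ∑ i ∈ Finset.univ.filter (fun i => x i = b), p i := by
  rw [load, Finset.sum_filter]

lemma load_add (p : Fin n → ℝ) (x : Fin n → Bool) :
    load p x false + load p x true = ∑ i, p i := by
  rw [load, load, ← Finset.sum_add_distrib]
  refine Finset.sum_congr rfl fun i _ => ?_
  cases hx : x i <;> simp [hx]

lemma mspan_eq_max (p : Fin n → ℝ) (x : Fin n → Bool) (b : Bool) :
    mspan p x = max (load p x b) (load p x !b) := by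
  cases b <;> simp [mspan, max_comm]

lemma disc_eq_abs (p : Fin n → ℝ) (x : Fin n → Bool) (b : Bool) :
    disc p x = |load p x b - load p x !b| := by
  cases b <;> simp [disc, abs_sub_comm]

lemma chooseB_le (p : Fin n → ℝ) (x : Fin n → Bool) :
    load p x (!chooseB p x) ≤ load p x (chooseB p x) := by
  rcases lt_or_ge (load p x false) (load p x true) with h | h
  · simp [chooseB, h, le_of_lt h]
  · simp [chooseB, not_lt.mpr h, h]

lemma chooseB_eq_of_lt {p : Fin n → ℝ} {x : Fin n → Bool} {b : Bool}
    (h : load p x (!b) < load p x b) : chooseB p x = b := by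
  cases b
  · simp only [Bool.not_false] at h
    simp [chooseB, not_lt.mpr (le_of_lt h)]
  · simp only [Bool.not_true] at h
    simp [chooseB, h]

lemma disc_eq_sub (p : Fin n → ℝ) (x : Fin n → Bool) :
    disc p x = load p x (chooseB p x) - load p x (!chooseB p x) := by
  rw [disc_eq_abs p x (chooseB p x), abs_of_nonneg (by linarith [chooseB_le p x])]

lemma mspan_eq_load (p : Fin n → ℝ) (x : Fin n → Bool) :
    mspan p x = load p x (chooseB p x) := by
  rw [mspan_eq_max p x (chooseB p x), max_eq_left (chooseB_le p x)]

lemma load_flip (p : Fin n → ℝ) (x : Fin n → Bool) (i : Fin n) (b : Bool) :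
    load p (flip x i) b = load p x b + (if (!(x i)) = b then p i else 0)
      - (if x i = b then p i else 0) := by
  classical
  have h1 : ∀ j ∈ Finset.univ.erase i,
      (if flip x i j = b then p j else 0) = (if x j = b then p j else 0) := by
    intro j hj
    have hne : j ≠ i := Finset.ne_of_mem_erase hj
    simp [flip, Function.update_of_ne hne]
  have e1 : load p (flip x i) b
      = (if flip x i i = b then p i else 0) + ∑ j ∈ Finset.univ.erase i,
          (if x j = b then p j else 0) := by
    rw [load, ← Finset.add_sum_erase _ _ (Finset.mem_univ i), Finset.sum_congr rfl h1]
  have e2 : load p x b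
      = (if x i = b then p i else 0) + ∑ j ∈ Finset.univ.erase i,
          (if x j = b then p j else 0) := by
    rw [load, ← Finset.add_sum_erase _ _ (Finset.mem_univ i)]
  have : flip x i i = !(x i) := by simp [flip]
  rw [e1, e2, this]; ring

lemma load_flip_same (p : Fin n → ℝ) (x : Fin n → Bool) (i : Fin n) :
    load p (flip x i) (x i) = load p x (x i) - p i := by
  rw [load_flip]; simp

lemma load_flip_other (p : Fin n → ℝ) (x : Fin n → Bool) (i : Fin n) :
    load p (flip x i) (!(x i)) = load p x (!(x i)) + p i := by
  rw [load_flip]; simp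

lemma disc_two_mspan (p : Fin n → ℝ) (x : Fin n → Bool) :
    disc p x = 2 * mspan p x - ∑ i, p i := by
  rw [← load_add p x, disc, mspan]
  rcases le_total (load p x false) (load p x true) with h | h
  · rw [abs_of_nonpos (by linarith), max_eq_right h]; ring
  · rw [abs_of_nonneg (by linarith), max_eq_left h]; ring

/-- If the discrepancy is at most `U`, every possible outcome of an RLS step keeps it so. -/
lemma good_step {U : ℝ} (p : Fin n → ℝ) (x : Fin n → Bool) (hgood : disc p x ≤ U) (i : Fin n) :
    disc p (if mspan p (flip x i) ≤ mspan p x then flip x i else x) ≤ U := by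
  split
  · next hacc =>
      have := disc_two_mspan p (flip x i)
      have := disc_two_mspan p x
      linarith
  · exact hgood

lemma kk_le (p : Fin n → ℝ) (x : Fin n → Bool) : kk p x ≤ n := by
  classical
  calc kk p x ≤ (Finset.univ : Finset (Fin n)).card := Finset.card_filter_le _ _
  _ = n := by simp

lemma vbound {L U : ℝ} (hL : 0 < L) (hLU : L ≤ U) {p : Fin n → ℝ}
    (hp : ∀ i, p i ∈ Set.Icc L U) {x : Fin n → Bool} (hbad : U < disc p x) :
    U + n * L ≤ (U + L) * kk p x := by
  classical
  have hd : disc p x = load p x (chooseB p x) - load p x (!(chooseB p x)) := disc_eq_sub p x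
  have hcard : (Finset.univ.filter fun i => x i = chooseB p x).card = kk p x := rfl
  have h1 : load p x (chooseB p x) ≤ (kk p x : ℝ) * U := by
    rw [load_filter, ← hcard, ← nsmul_eq_mul]
    exact Finset.sum_le_card_nsmul _ _ _ (fun i _ => (hp i).2)
  have hkn : kk p x ≤ n := kk_le p x
  have hcard2 : (Finset.univ.filter fun i => ¬ (x i = chooseB p x)).card = n - kk p x := by
    have h := Finset.card_filter_add_card_filter_not
      (s := (Finset.univ : Finset (Fin n))) (p := fun i => x i = chooseB p x)
    rw [Finset.card_univ, Fintype.card_fin, hcard] at h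
    omega
  have hfilter : (Finset.univ.filter fun i => x i = !(chooseB p x))
      = (Finset.univ.filter fun i => ¬ (x i = chooseB p x)) := by
    apply Finset.filter_congr
    intro i _
    exact Bool.eq_not_iff
  have h2 : ((n : ℝ) - kk p x) * L ≤ load p x (!(chooseB p x)) := by
    rw [load_filter, hfilter]
    have h := Finset.card_nsmul_le_sum
      (Finset.univ.filter fun i => ¬ (x i = chooseB p x)) p L (fun i _ => (hp i).1)
    rw [hcard2, nsmul_eq_mul, Nat.cast_sub hkn] at h
    exact h
  nlinarith [h1, h2, hbad, hd]

lemma kk_pos {L U : ℝ} (hL : 0 < L) (hLU : L ≤ U) {p : Fin n → ℝ}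
    (hp : ∀ i, p i ∈ Set.Icc L U) {x : Fin n → Bool} (hbad : U < disc p x) :
    1 ≤ kk p x := by
  by_contra h
  have hk0 : kk p x = 0 := by omega
  have := vbound hL hLU hp hbad
  rw [hk0] at this
  have hU : 0 < U := lt_of_lt_of_le hL hLU
  have hn0 : (0:ℝ) ≤ (n:ℝ) * L := by positivity
  simp only [Nat.cast_zero, mul_zero] at this
  linarith

/-- Accepted flip from the fuller machine. -/
lemma accept_flip {L U : ℝ} (hL : 0 < L) (hLU : L ≤ U) {p : Fin n → ℝ}
    (hp : ∀ i, p i ∈ Set.Icc L U) {x : Fin n → Bool} (hbad : U < disc p x)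
    {i : Fin n} (hxi : x i = chooseB p x) :
    mspan p (flip x i) ≤ mspan p x := by
  set b := chooseB p x with hb
  have hd : disc p x = load p x b - load p x (!b) := disc_eq_sub p x
  have h1 : load p (flip x i) b = load p x b - p i := by
    have := load_flip_same p x i; rw [hxi] at this; exact this
  have h2 : load p (flip x i) (!b) = load p x (!b) + p i := by
    have := load_flip_other p x i; rw [hxi] at this; exact this
  rw [mspan_eq_max p (flip x i) b, mspan_eq_load p x, h1, h2]
  have hpi := hp i
  apply max_le <;> [skip; skip] <;>
    [linarith [hpi.1]; linarith [hpi.2, hbad]]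

/-- Rejected flip from the lighter machine. -/
lemma reject_flip {L U : ℝ} (hL : 0 < L) (hLU : L ≤ U) {p : Fin n → ℝ}
    (hp : ∀ i, p i ∈ Set.Icc L U) {x : Fin n → Bool}
    {i : Fin n} (hxi : ¬ (x i = chooseB p x)) :
    ¬ mspan p (flip x i) ≤ mspan p x := by
  set b := chooseB p x with hb
  have hxib : x i = !b := by cases hxb : x i <;> cases hbb : b <;> simp_all
  have h1 : load p (flip x i) b = load p x b + p i := by
    have := load_flip_other p x i; rw [hxib] at this; simpa using this
  have hpi := hp i
  rw [not_le, mspan_eq_max p (flip x i) b, mspan_eq_load p x]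
  calc load p x b < load p x b + p i := by linarith [hpi.1]
    _ ≤ max (load p (flip x i) b) (load p (flip x i) !b) := by
        rw [h1]; exact le_max_left _ _
  
/-- If a flip from the fuller machine leaves the state bad, the fuller machine is
unchanged and the count drops by one. -/
lemma kk_flip {L U : ℝ} (hL : 0 < L) (hLU : L ≤ U) {p : Fin n → ℝ}
    (hp : ∀ i, p i ∈ Set.Icc L U) {x : Fin n → Bool} (hbad : U < disc p x)
    {i : Fin n} (hxi : x i = chooseB p x) (hbad' : U < disc p (flip x i)) :
    (kk p (flip x i) : ℝ) = (kk p x : ℝ) - 1 := by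
  classical
  set b := chooseB p x with hb
  have hd : disc p x = load p x b - load p x (!b) := disc_eq_sub p x
  have h1 : load p (flip x i) b = load p x b - p i := by
    have := load_flip_same p x i; rw [hxi] at this; exact this
  have h2 : load p (flip x i) (!b) = load p x (!b) + p i := by
    have := load_flip_other p x i; rw [hxi] at this; exact this
  have hpi := hp i
  have habs : disc p (flip x i) = |load p (flip x i) b - load p (flip x i) (!b)| :=
    disc_eq_abs _ _ _
  have horient : load p (flip x i) (!b) < load p (flip x i) b := by
    rcases lt_or_ge (load p (flip x i) b - load p (flip x i) (!b)) 0 with hlt | hge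
    · exfalso
      rw [habs, abs_of_neg hlt] at hbad'
      rw [h1, h2] at hbad' hlt
      -- disc flip = 2 p i - d ≤ 2U - d < U, contradiction
      have hUd : U < load p x b - load p x (!b) := by rw [← hd]; exact hbad
      linarith [hpi.2]
    · have : 0 < load p (flip x i) b - load p (flip x i) (!b) := by
        rcases eq_or_lt_of_le hge with heq | hlt
        · exfalso
          rw [habs, ← heq, abs_zero] at hbad'
          have hU : 0 < U := lt_of_lt_of_le hL hLU
          linarith
        · exact hlt
      linarith
  have hcb : chooseB p (flip x i) = b := chooseB_eq_of_lt horient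
  have hset : (Finset.univ.filter fun j => flip x i j = chooseB p (flip x i))
      = (Finset.univ.filter fun j => x j = b).erase i := by
    rw [hcb]
    ext j
    simp only [Finset.mem_filter, Finset.mem_erase, Finset.mem_univ, true_and]
    constructor
    · intro hj
      rcases eq_or_ne j i with rfl | hne
      · exfalso
        have : flip x j j = !(x j) := by simp [flip]
        rw [this, hxi] at hj
        simp at hj
      · have : flip x i j = x j := by simp [flip, Function.update_of_ne hne]
        exact ⟨hne, by rw [← this]; exact hj⟩
    · rintro ⟨hne, hj⟩
      have : flip x i j = x j := by simp [flip, Function.update_of_ne hne]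
      rw [this]; exact hj
  have hmem : i ∈ Finset.univ.filter fun j => x j = b := by
    simp [hxi]
  have hk1 : 1 ≤ kk p x := kk_pos hL hLU hp hbad
  have : kk p (flip x i) = kk p x - 1 := by
    rw [kk, hset, Finset.card_erase_of_mem hmem]; rfl
  rw [this, Nat.cast_sub hk1, Nat.cast_one]

/-- The fuller machine (hence the count) is unchanged by an admissible adversary move
that keeps the state bad. -/
lemma kk_adv {L U : ℝ} (hL : 0 < L) (hLU : L ≤ U) {p p' : Fin n → ℝ}
    (hp : ∀ i, p i ∈ Set.Icc L U) (hp' : ∀ i, p' i ∈ Set.Icc L U)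
    {j₀ : Fin n} (hpp : ∀ i, i ≠ j₀ → p' i = p i) {x : Fin n → Bool}
    (hbad : U < disc p x) :
    kk p' x = kk p x := by
  classical
  set b := chooseB p x with hb
  have hload : ∀ c : Bool, load p' x c = load p x c +
      (if x j₀ = c then p' j₀ - p j₀ else 0) := by
    intro c
    have e1 : load p' x c = (if x j₀ = c then p' j₀ else 0) + ∑ j ∈ Finset.univ.erase j₀,
        (if x j = c then p' j else 0) := by
      rw [load, ← Finset.add_sum_erase _ _ (Finset.mem_univ j₀)]
    have e2 : load p x c = (if x j₀ = c then p j₀ else 0) + ∑ j ∈ Finset.univ.erase j₀,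
        (if x j = c then p j else 0) := by
      rw [load, ← Finset.add_sum_erase _ _ (Finset.mem_univ j₀)]
    have hsame : ∀ j ∈ Finset.univ.erase j₀,
        (if x j = c then p' j else 0) = (if x j = c then p j else 0) := by
      intro j hj
      rw [hpp j (Finset.ne_of_mem_erase hj)]
    rw [e1, e2, Finset.sum_congr rfl hsame]
    by_cases hc : x j₀ = c <;> simp [hc] <;> ring
  have hdelta : |p' j₀ - p j₀| ≤ U - L := by
    have h1 := hp j₀; have h2 := hp' j₀
    rw [abs_le]; constructor <;> [linarith [h1.2, h2.1]; linarith [h1.1, h2.2]]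
  have hd : disc p x = load p x b - load p x (!b) := disc_eq_sub p x
  have hbool : ∀ c : Bool, ¬ (c = !c) := by decide
  have horient : load p' x (!b) < load p' x b := by
    rw [hload b, hload (!b)]
    have habs := abs_le.mp hdelta
    by_cases hc1 : x j₀ = b
    · rw [if_pos hc1, if_neg (by rw [hc1]; exact hbool b)]
      linarith
    · have hc2 : x j₀ = !b := Bool.eq_not_iff.mpr hc1
      rw [if_neg hc1, if_pos hc2]
      linarith
  have hcb : chooseB p' x = b := chooseB_eq_of_lt horient
  rw [kk, kk, hcb, ← hb]

/-- The single step drift bound: summed over the choice of the flipped bit. -/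
lemma drift_step {L U : ℝ} (hL : 0 < L) (hLU : L ≤ U) {p : Fin n → ℝ}
    (hp : ∀ i, p i ∈ Set.Icc L U) {x : Fin n → Bool} (hbad : U < disc p x) :
    (∑ i : Fin n, (if U < disc p (if mspan p (flip x i) ≤ mspan p x then flip x i else x)
        then ENNReal.ofReal ((U + L) *
          (kk p (if mspan p (flip x i) ≤ mspan p x then flip x i else x)))
        else 0))
      ≤ ENNReal.ofReal ((U + L) * (kk p x) * ((n : ℝ) - 1)) := by
  classical
  have hU : 0 < U := lt_of_lt_of_le hL hLU
  set k := kk p x with hk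
  have hk1 : 1 ≤ k := kk_pos hL hLU hp hbad
  have hkn : k ≤ n := kk_le p x
  have hterm : ∀ i : Fin n,
      (if U < disc p (if mspan p (flip x i) ≤ mspan p x then flip x i else x)
        then ENNReal.ofReal ((U + L) *
          (kk p (if mspan p (flip x i) ≤ mspan p x then flip x i else x)))
        else 0)
      ≤ (if x i = chooseB p x then ENNReal.ofReal ((U + L) * ((k : ℝ) - 1))
          else ENNReal.ofReal ((U + L) * (k : ℝ))) := by
    intro i
    by_cases hxi : x i = chooseB p x
    · rw [if_pos hxi, if_pos (accept_flip hL hLU hp hbad hxi)]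
      by_cases hbad' : U < disc p (flip x i)
      · rw [if_pos hbad', kk_flip hL hLU hp hbad hxi hbad']
      · rw [if_neg hbad']; exact zero_le
    · rw [if_neg hxi, if_neg (reject_flip hL hLU hp hxi), if_pos hbad]
  calc (∑ i : Fin n, _) ≤ ∑ i : Fin n, (if x i = chooseB p x
        then ENNReal.ofReal ((U + L) * ((k : ℝ) - 1))
        else ENNReal.ofReal ((U + L) * (k : ℝ))) := Finset.sum_le_sum fun i _ => hterm i
    _ = (Finset.univ.filter fun i => x i = chooseB p x).card •
          ENNReal.ofReal ((U + L) * ((k : ℝ) - 1)) +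
        (Finset.univ.filter fun i => ¬ (x i = chooseB p x)).card •
          ENNReal.ofReal ((U + L) * (k : ℝ)) := by
        rw [Finset.sum_ite _ _, Finset.sum_const, Finset.sum_const]
    _ ≤ ENNReal.ofReal ((U + L) * (kk p x) * ((n : ℝ) - 1)) := by
        have hcard : (Finset.univ.filter fun i => x i = chooseB p x).card = k := rfl
        have hcard2 : (Finset.univ.filter fun i => ¬ (x i = chooseB p x)).card = n - k := by
          have h := Finset.card_filter_add_card_filter_not
            (s := (Finset.univ : Finset (Fin n))) (p := fun i => x i = chooseB p x)
          rw [Finset.card_univ, Fintype.card_fin, hcard] at h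
          omega
        rw [hcard, hcard2]
        have hk1R : (1:ℝ) ≤ (k:ℝ) := by exact_mod_cast hk1
        have hknR : (k:ℝ) ≤ (n:ℝ) := by exact_mod_cast hkn
        have hUL : (0:ℝ) ≤ U + L := by linarith
        have hnk : ((n - k : ℕ) : ℝ) = (n:ℝ) - (k:ℝ) := by rw [Nat.cast_sub hkn]
        have e1 : ∀ (m : ℕ) (r : ℝ), 0 ≤ r →
            (m • ENNReal.ofReal r) = ENNReal.ofReal ((m : ℝ) * r) := by
          intro m r hr
          rw [nsmul_eq_mul, ← ENNReal.ofReal_natCast m,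
            ← ENNReal.ofReal_mul (Nat.cast_nonneg m)]
        rw [e1 _ _ (mul_nonneg hUL (by linarith)),
            e1 _ _ (mul_nonneg hUL (by positivity)),
            ← ENNReal.ofReal_add
              (mul_nonneg (Nat.cast_nonneg k) (mul_nonneg hUL (by linarith)))
              (mul_nonneg (Nat.cast_nonneg _) (mul_nonneg hUL (by positivity)))]
        apply ENNReal.ofReal_le_ofReal
        rw [hnk, ← hk]
        apply le_of_eq
        ring

/-! ### Expectation machinery for `PMF` -/

lemma exv_pure {α : Type*} (a : α) (g : α → ℝ≥0∞) :
    ∑' b, (PMF.pure a) b * g b = g a := by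
  classical
  rw [← tsum_ite_eq a g]
  refine tsum_congr fun b => ?_
  by_cases hb : b = a
  · subst hb; simp [PMF.pure_apply]
  · simp [PMF.pure_apply, hb]

lemma exv_bind {α β : Type*} (p : PMF α) (f : α → PMF β) (g : β → ℝ≥0∞) :
    ∑' b, (p.bind f) b * g b = ∑' a, p a * ∑' b, (f a) b * g b := by
  simp only [PMF.bind_apply]
  calc ∑' b, (∑' a, p a * (f a) b) * g b
      = ∑' b, ∑' a, p a * (f a) b * g b := by
        refine tsum_congr fun b => ?_
        rw [← ENNReal.tsum_mul_right]
    _ = ∑' a, ∑' b, p a * (f a) b * g b := ENNReal.tsum_comm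
    _ = ∑' a, p a * ∑' b, (f a) b * g b := by
        refine tsum_congr fun a => ?_
        rw [← ENNReal.tsum_mul_left]
        exact tsum_congr fun b => by ring

lemma exv_map {α β : Type*} (p : PMF α) (f : α → β) (g : β → ℝ≥0∞) :
    ∑' b, (p.map f) b * g b = ∑' a, p a * g (f a) := by
  show ∑' b, (p.bind (PMF.pure ∘ f)) b * g b = _
  rw [exv_bind]
  exact tsum_congr fun a => by rw [Function.comp_apply, exv_pure]

/-! ### The potential function on histories -/

open Classical in
/-- The potential of a history: `(U+L) ·` (number of jobs on the fuller machine in the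
most recent configuration), provided the whole history is bad (discrepancy `> U`) with
processing times in the box `[L,U]`; otherwise `0`. -/
noncomputable def B (L U : ℝ) {n : ℕ} (h : List (Cfg n)) : ℝ≥0∞ :=
  if ∀ c ∈ h, (U < disc c.2 c.1) ∧ ∀ i, c.2 i ∈ Set.Icc L U then
    ENNReal.ofReal ((U + L) * (kk h.headI.2 h.headI.1))
  else 0

lemma kk_nil (n : ℕ) :
    kk (List.headI ([] : List (Cfg n))).2 (List.headI ([] : List (Cfg n))).1 = n := by
  classical
  show kk (fun _ => (0:ℝ)) (fun _ : Fin n => false) = n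
  have h0 : load (fun _ => (0:ℝ)) (fun _ : Fin n => false) false
      = load (fun _ => (0:ℝ)) (fun _ : Fin n => false) true := by
    simp [load]
  have hcb : chooseB (fun _ => (0:ℝ)) (fun _ : Fin n => false) = false := by
    unfold chooseB
    rw [if_neg (by rw [h0]; exact lt_irrefl _)]
  unfold kk
  rw [hcb]
  simp

lemma enn_alg {n : ℕ} (hn : 0 < n) (a : ℝ) (ha : 0 ≤ a) :
    (n : ℝ≥0∞)⁻¹ * ENNReal.ofReal (a * ((n:ℝ) - 1)) =
      ENNReal.ofReal (((n:ℝ) - 1) / n) * ENNReal.ofReal a := by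
  have hn0 : (0:ℝ) < n := by exact_mod_cast hn
  have hn1 : (1:ℝ) ≤ n := by exact_mod_cast hn
  rw [← ENNReal.ofReal_natCast n, ← ENNReal.ofReal_inv_of_pos hn0,
      ← ENNReal.ofReal_mul (by positivity),
      ← ENNReal.ofReal_mul (div_nonneg (by linarith) (le_of_lt hn0))]
  congr 1
  field_simp

/-- One full iteration (adversary move followed by an RLS step) shrinks the expected
potential by a factor `(n-1)/n`. -/
lemma W_step {n : ℕ} (hn : 0 < n) {L U : ℝ} (hL : 0 < L) (hLU : L ≤ U)
    (p' : Fin n → ℝ) (hp' : ∀ i, p' i ∈ Set.Icc L U)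
    (h : List (Cfg n)) (hconn : ∃ i₀, ∀ i, i ≠ i₀ → p' i = h.headI.2 i) :
    ∑' x', (rlsStep hn p' h.headI.1) x' * B L U ((x', p') :: h) ≤
      ENNReal.ofReal (((n:ℝ) - 1) / n) * B L U h := by
  classical
  have hU : 0 < U := lt_of_lt_of_le hL hLU
  have hn1 : (1:ℝ) ≤ (n:ℝ) := by exact_mod_cast hn
  haveI : Nonempty (Fin n) := Fin.pos_iff_nonempty.mp hn
  have hmap : ∑' x', (rlsStep hn p' h.headI.1) x' * B L U ((x', p') :: h)
      = ∑' i : Fin n, (PMF.uniformOfFintype (Fin n)) i *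
          B L U (((if mspan p' (flip h.headI.1 i) ≤ mspan p' h.headI.1
              then flip h.headI.1 i else h.headI.1), p') :: h) :=
    exv_map _ _ _
  have huni : ∀ i : Fin n, (PMF.uniformOfFintype (Fin n)) i = (n:ℝ≥0∞)⁻¹ := by
    intro i
    rw [PMF.uniformOfFintype_apply, Fintype.card_fin]
  rw [hmap, tsum_fintype]
  simp only [huni]
  by_cases hQ : ∀ c ∈ h, (U < disc c.2 c.1) ∧ ∀ i, c.2 i ∈ Set.Icc L U
  · -- whole history is bad so far
    have hBh : B L U h = ENNReal.ofReal ((U+L) * (kk h.headI.2 h.headI.1)) := by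
      simp only [B]; rw [if_pos hQ]
    by_cases hbad' : U < disc p' h.headI.1
    · -- after the adversary's move the state is still bad
      have hkk : ((kk p' h.headI.1 : ℝ)) ≤ ((kk h.headI.2 h.headI.1 : ℝ)) := by
        cases h with
        | nil =>
            have h1 : (kk p' (List.headI ([] : List (Cfg n))).1 : ℝ) ≤ (n : ℝ) := by
              exact_mod_cast kk_le _ _
            rw [kk_nil n]
            exact h1
        | cons c t =>
            obtain ⟨i₀, hi₀⟩ := hconn
            have hc := (List.forall_mem_cons.mp hQ).1
            have : kk p' (c :: t).headI.1 = kk (c :: t).headI.2 (c :: t).headI.1 := by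
              exact kk_adv hL hLU hc.2 hp' hi₀ hc.1
            rw [this]
      have hBcons : ∀ y : Fin n → Bool, B L U ((y, p') :: h)
          = if U < disc p' y then ENNReal.ofReal ((U+L) * (kk p' y)) else 0 := by
        intro y
        simp only [B]
        by_cases hb : U < disc p' y
        · rw [if_pos (List.forall_mem_cons.mpr ⟨⟨hb, hp'⟩, hQ⟩), if_pos hb]
          rfl
        · rw [if_neg (fun hcond => hb (List.forall_mem_cons.mp hcond).1.1), if_neg hb]
      calc ∑ i : Fin n, (n:ℝ≥0∞)⁻¹ *
              B L U (((if mspan p' (flip h.headI.1 i) ≤ mspan p' h.headI.1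
                then flip h.headI.1 i else h.headI.1), p') :: h)
          = (n:ℝ≥0∞)⁻¹ * ∑ i : Fin n,
              (if U < disc p' (if mspan p' (flip h.headI.1 i) ≤ mspan p' h.headI.1
                  then flip h.headI.1 i else h.headI.1)
                then ENNReal.ofReal ((U+L) *
                  (kk p' (if mspan p' (flip h.headI.1 i) ≤ mspan p' h.headI.1
                    then flip h.headI.1 i else h.headI.1)))
                else 0) := by
            rw [Finset.mul_sum]
            exact Finset.sum_congr rfl fun i _ => by rw [hBcons]
        _ ≤ (n:ℝ≥0∞)⁻¹ * ENNReal.ofReal ((U+L) * (kk p' h.headI.1) * ((n:ℝ) - 1)) :=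
            mul_le_mul_right (drift_step hL hLU hp' hbad') _
        _ ≤ (n:ℝ≥0∞)⁻¹ * ENNReal.ofReal ((U+L) * (kk h.headI.2 h.headI.1) * ((n:ℝ) - 1)) := by
            refine mul_le_mul_right (ENNReal.ofReal_le_ofReal ?_) _
            have hUL : (0:ℝ) ≤ U + L := by linarith
            exact mul_le_mul_of_nonneg_right
              (mul_le_mul_of_nonneg_left hkk hUL) (by linarith)
        _ = ENNReal.ofReal (((n:ℝ) - 1) / n) *
              ENNReal.ofReal ((U+L) * (kk h.headI.2 h.headI.1)) := by
            exact enn_alg hn _ (mul_nonneg (by linarith) (Nat.cast_nonneg _))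
        _ = ENNReal.ofReal (((n:ℝ) - 1) / n) * B L U h := by rw [hBh]
    · -- the adversary's move made the state good; it stays good during the step
      have hzero : ∀ i : Fin n,
          B L U (((if mspan p' (flip h.headI.1 i) ≤ mspan p' h.headI.1
              then flip h.headI.1 i else h.headI.1), p') :: h) = 0 := by
        intro i
        have hg : disc p' (if mspan p' (flip h.headI.1 i) ≤ mspan p' h.headI.1
            then flip h.headI.1 i else h.headI.1) ≤ U :=
          good_step p' h.headI.1 (not_lt.mp hbad') i
        simp only [B]
        rw [if_neg (fun hcond => absurd hg (not_le.mpr (List.forall_mem_cons.mp hcond).1.1))]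
      calc ∑ i : Fin n, (n:ℝ≥0∞)⁻¹ *
              B L U (((if mspan p' (flip h.headI.1 i) ≤ mspan p' h.headI.1
                then flip h.headI.1 i else h.headI.1), p') :: h)
          = 0 := Finset.sum_eq_zero fun i _ => by rw [hzero i, mul_zero]
        _ ≤ _ := zero_le
  · -- history already contains a good configuration (or leaves the box): everything is 0
    have hzero : ∀ i : Fin n,
        B L U (((if mspan p' (flip h.headI.1 i) ≤ mspan p' h.headI.1
            then flip h.headI.1 i else h.headI.1), p') :: h) = 0 := by
      intro i
      simp only [B]
      rw [if_neg (fun hcond => hQ (List.forall_mem_cons.mp hcond).2)]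
    calc ∑ i : Fin n, (n:ℝ≥0∞)⁻¹ *
            B L U (((if mspan p' (flip h.headI.1 i) ≤ mspan p' h.headI.1
              then flip h.headI.1 i else h.headI.1), p') :: h)
        = 0 := Finset.sum_eq_zero fun i _ => by rw [hzero i, mul_zero]
      _ ≤ _ := zero_le

/-- Iterating the one-step drift bound. -/
lemma W_le {n : ℕ} (hn : 0 < n) {L U : ℝ} (hL : 0 < L) (hLU : L ≤ U)
    (adv : List (Cfg n) → Fin n → ℝ) (hadv : ∀ h i, adv h i ∈ Set.Icc L U)
    (hadv1 : ∀ h : List (Cfg n), ∃ i₀, ∀ i, i ≠ i₀ → adv h i = h.headI.2 i)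
    (x₀ : Fin n → Bool) (p₀ : Fin n → ℝ) :
    ∀ t, ∑' h, (run (rlsStep hn) adv (x₀, p₀) t) h * B L U h ≤
      ENNReal.ofReal (((n:ℝ) - 1) / n) ^ t * ENNReal.ofReal ((U + L) * n) := by
  intro t
  induction t with
  | zero =>
      have h0 : run (rlsStep hn) adv (x₀, p₀) 0 = PMF.pure [(x₀, p₀)] := rfl
      rw [h0, exv_pure, pow_zero, one_mul]
      simp only [B]
      split
      · apply ENNReal.ofReal_le_ofReal
        have hkle : ((kk (List.headI [(x₀,p₀)]).2 (List.headI [(x₀,p₀)]).1 : ℕ) : ℝ)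
            ≤ (n:ℝ) := by exact_mod_cast kk_le _ _
        have hUL : (0:ℝ) ≤ U + L := by linarith [lt_of_lt_of_le hL hLU]
        exact mul_le_mul_of_nonneg_left hkle hUL
      · exact zero_le
  | succ t ih =>
      have hs : run (rlsStep hn) adv (x₀, p₀) (t+1)
          = (run (rlsStep hn) adv (x₀, p₀) t).bind
              (fun h => (rlsStep hn (adv h) h.headI.1).map fun x' => (x', adv h) :: h) := rfl
      rw [hs, exv_bind]
      have hpoint : ∀ h : List (Cfg n),
          (∑' y, ((rlsStep hn (adv h) h.headI.1).map fun x' => (x', adv h) :: h) y * B L U y)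
          ≤ ENNReal.ofReal (((n:ℝ) - 1) / n) * B L U h := by
        intro h
        rw [exv_map]
        exact W_step hn hL hLU (adv h) (hadv h) h (hadv1 h)
      refine le_trans (ENNReal.tsum_le_tsum fun h => mul_le_mul_right (hpoint h) _) ?_
      have hpull : ∑' h, (run (rlsStep hn) adv (x₀, p₀) t) h *
              (ENNReal.ofReal (((n:ℝ) - 1) / n) * B L U h)
          = ENNReal.ofReal (((n:ℝ) - 1) / n) *
              ∑' h, (run (rlsStep hn) adv (x₀, p₀) t) h * B L U h := by
        rw [← ENNReal.tsum_mul_left]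
        exact tsum_congr fun h => by ring
      rw [hpull]
      calc ENNReal.ofReal (((n:ℝ) - 1) / n) *
              ∑' h, (run (rlsStep hn) adv (x₀, p₀) t) h * B L U h
          ≤ ENNReal.ofReal (((n:ℝ) - 1) / n) *
              (ENNReal.ofReal (((n:ℝ) - 1) / n) ^ t * ENNReal.ofReal ((U + L) * n)) :=
            mul_le_mul_right ih _
        _ = ENNReal.ofReal (((n:ℝ) - 1) / n) ^ (t+1) * ENNReal.ofReal ((U + L) * n) := by
            ring

/-- Every history in the support of the run is nonempty and consists of configurations
whose processing times lie in the box. -/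
lemma run_support {n : ℕ} (hn : 0 < n) {L U : ℝ}
    (adv : List (Cfg n) → Fin n → ℝ) (hadv : ∀ h i, adv h i ∈ Set.Icc L U)
    (x₀ : Fin n → Bool) (p₀ : Fin n → ℝ) (hp₀ : ∀ i, p₀ i ∈ Set.Icc L U) :
    ∀ t h, h ∈ (run (rlsStep hn) adv (x₀, p₀) t).support →
      h ≠ [] ∧ ∀ c ∈ h, ∀ i, c.2 i ∈ Set.Icc L U := by
  intro t
  induction t with
  | zero =>
      intro h hh
      have hsup : (run (rlsStep hn) adv (x₀, p₀) 0).support = {[(x₀, p₀)]} := by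
        show (PMF.pure [(x₀, p₀)]).support = _
        exact PMF.support_pure _
      rw [hsup] at hh
      rw [Set.mem_singleton_iff] at hh
      subst hh
      refine ⟨by simp, ?_⟩
      intro c hc
      rw [List.mem_singleton] at hc
      subst hc
      exact hp₀
  | succ t ih =>
      intro h hh
      have hh' : h ∈ ((run (rlsStep hn) adv (x₀, p₀) t).bind
          (fun h0 => (rlsStep hn (adv h0) h0.headI.1).map fun x' => (x', adv h0) :: h0)).support := hh
      rcases (PMF.mem_support_bind_iff _ _ _).mp hh' with ⟨h0, hh0, hmem⟩
      rw [PMF.support_map] at hmem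
      rcases hmem with ⟨x', hx', rfl⟩
      refine ⟨by simp, ?_⟩
      intro c hc
      rcases List.mem_cons.mp hc with rfl | hc
      · exact hadv h0
      · exact (ih h0 hh0).2 c hc

end Aux

/-- The expected time until RLS has obtained a solution `x` with
`d(x) ≤ U` is `O(n · (1 + min{log n, log R}))`, independently of the initial solution
and the number of changes made by the adversary (which changes at most one
processing time, to a value in `[L, U]`, per iteration). -/
theorem rls_adversary_discrepancy :
    ∃ C : ℝ, 0 < C ∧
      ∀ (n : ℕ) (hn : 0 < n) (L U : ℝ), 0 < L → L ≤ U →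
        ∀ adv : List (Cfg n) → (Fin n → ℝ),
          (∀ h i, adv h i ∈ Set.Icc L U) →
          (∀ h : List (Cfg n), ∃ i₀, ∀ i, i ≠ i₀ → adv h i = h.headI.2 i) →
          ∀ (x₀ : Fin n → Bool) (p₀ : Fin n → ℝ), (∀ i, p₀ i ∈ Set.Icc L U) →
            expectedHittingTime (run (rlsStep hn) adv (x₀, p₀))
                (fun c => disc c.2 c.1 ≤ U) ≤
              ENNReal.ofReal (C * n * (1 + min (Real.log n) (Real.log (U / L)))) := by
  classical
  refine ⟨4, by norm_num, ?_⟩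
  intro n hn L U hL hLU adv hadv hadv1 x₀ p₀ hp₀
  have hU : 0 < U := lt_of_lt_of_le hL hLU
  have hn1 : (1:ℝ) ≤ (n:ℝ) := by exact_mod_cast hn
  have hnpos : (0:ℝ) < (n:ℝ) := by linarith
  have hr0 : (0:ℝ) ≤ ((n:ℝ) - 1) / n := div_nonneg (by linarith) (by linarith)
  have hr1 : ((n:ℝ) - 1) / n < 1 := by
    rw [div_lt_one hnpos]; linarith
  have hDpos : (0:ℝ) < U + n * L := by positivity
  set a : ℝ := (U + L) * n / (U + n * L) with hadef
  have ha1 : 1 ≤ a := by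
    rw [hadef, le_div_iff₀ hDpos]
    nlinarith [mul_nonneg hU.le (by linarith : (0:ℝ) ≤ (n:ℝ) - 1)]
  have ha0 : 0 < a := lt_of_lt_of_le one_pos ha1
  have ha2n : a ≤ 2 * n := by
    rw [hadef, div_le_iff₀ hDpos]
    nlinarith [mul_nonneg hnpos.le hL.le, mul_pos hnpos hU, mul_nonneg (mul_nonneg hnpos.le hnpos.le) hL.le]
  have ha2R : a ≤ 2 * (U / L) := by
    have h2 : 2 * (U / L) = (2 * U) / L := by ring
    rw [hadef, h2, div_le_div_iff₀ hDpos hL]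
    nlinarith [mul_nonneg (mul_nonneg hnpos.le hL.le) (sub_nonneg.mpr hLU), mul_pos hU hU]
  -- The probability that no good configuration has appeared by time t
  have hq1 : ∀ t, (run (rlsStep hn) adv (x₀, p₀) t).toOuterMeasure
      {h | ∀ c ∈ h, ¬ disc c.2 c.1 ≤ U} ≤ 1 := by
    intro t
    rw [PMF.toOuterMeasure_apply]
    calc ∑' h, Set.indicator {h : List (Cfg n) | ∀ c ∈ h, ¬ disc c.2 c.1 ≤ U}
            (⇑(run (rlsStep hn) adv (x₀, p₀) t)) h
        ≤ ∑' h, (run (rlsStep hn) adv (x₀, p₀) t) h := by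
          refine ENNReal.tsum_le_tsum fun h => ?_
          by_cases hmem : h ∈ {h : List (Cfg n) | ∀ c ∈ h, ¬ disc c.2 c.1 ≤ U}
          · rw [Set.indicator_of_mem hmem]
          · rw [Set.indicator_of_notMem hmem]; exact zero_le
      _ = 1 := PMF.tsum_coe _
  have hq2 : ∀ t, (run (rlsStep hn) adv (x₀, p₀) t).toOuterMeasure
      {h | ∀ c ∈ h, ¬ disc c.2 c.1 ≤ U} ≤ ENNReal.ofReal (a * (((n:ℝ) - 1) / n) ^ t) := by
    intro t
    have hD0 : ENNReal.ofReal (U + n * L) ≠ 0 := by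
      rw [Ne, ENNReal.ofReal_eq_zero]; push_neg; exact hDpos
    have hDtop : ENNReal.ofReal (U + n * L) ≠ ⊤ := ENNReal.ofReal_ne_top
    rw [← ENNReal.mul_le_mul_iff_left hD0 hDtop]
    have hstep1 : (run (rlsStep hn) adv (x₀, p₀) t).toOuterMeasure
          {h | ∀ c ∈ h, ¬ disc c.2 c.1 ≤ U} * ENNReal.ofReal (U + n * L)
        ≤ ∑' h, (run (rlsStep hn) adv (x₀, p₀) t) h * B L U h := by
      rw [PMF.toOuterMeasure_apply, ← ENNReal.tsum_mul_right]
      refine ENNReal.tsum_le_tsum fun h => ?_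
      by_cases hmem : h ∈ {h : List (Cfg n) | ∀ c ∈ h, ¬ disc c.2 c.1 ≤ U}
      · rw [Set.indicator_of_mem hmem]
        by_cases hzero : (run (rlsStep hn) adv (x₀, p₀) t) h = 0
        · rw [hzero, zero_mul, zero_mul]
        · have hs := run_support hn adv hadv x₀ p₀ hp₀ t h (PMF.mem_support_iff _ _ |>.mpr hzero)
          have hcond : ∀ c ∈ h, (U < disc c.2 c.1) ∧ ∀ i, c.2 i ∈ Set.Icc L U := by
            intro c hc; exact ⟨not_le.mp (hmem c hc), hs.2 c hc⟩
          have hBh : B L U h = ENNReal.ofReal ((U + L) * (kk h.headI.2 h.headI.1)) := by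
            simp only [B]; rw [if_pos hcond]
          have hhead : h.headI ∈ h := by
            cases h with
            | nil => exact absurd rfl hs.1
            | cons c t' => exact List.mem_cons_self
          have hv : U + n * L ≤ (U + L) * (kk h.headI.2 h.headI.1) :=
            vbound hL hLU (hcond _ hhead).2 (hcond _ hhead).1
          rw [hBh]
          exact mul_le_mul_right (ENNReal.ofReal_le_ofReal hv) _
      · rw [Set.indicator_of_notMem hmem, zero_mul]; exact zero_le
    refine le_trans hstep1 (le_trans (W_le hn hL hLU adv hadv hadv1 x₀ p₀ t) ?_)
    rw [← ENNReal.ofReal_pow hr0, ← ENNReal.ofReal_mul (pow_nonneg hr0 t),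
        ← ENNReal.ofReal_mul (by positivity)]
    apply ENNReal.ofReal_le_ofReal
    have hkey : a * (U + n * L) = (U + L) * n := by
      rw [hadef]; field_simp
    calc (((n:ℝ) - 1) / n) ^ t * ((U + L) * n)
        = a * (((n:ℝ) - 1) / n) ^ t * (U + n * L) := by rw [← hkey]; ring
      _ ≤ a * (((n:ℝ) - 1) / n) ^ t * (U + n * L) := le_rfl
  -- choose the cut-off time
  set t₀ : ℕ := ⌈(n:ℝ) * Real.log a⌉₊ with ht₀def
  have hla0 : 0 ≤ Real.log a := Real.log_nonneg ha1
  have hart : a * (((n:ℝ) - 1) / n) ^ t₀ ≤ 1 := by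
    have hreq : ((n:ℝ) - 1) / n = 1 - 1/(n:ℝ) := by field_simp
    have h1 : ((n:ℝ) - 1) / n ≤ Real.exp (-(1/(n:ℝ))) := by
      have := Real.add_one_le_exp (-(1/(n:ℝ)))
      rw [hreq]; linarith
    have h2 : (((n:ℝ) - 1) / n) ^ t₀ ≤ Real.exp (-(1/(n:ℝ))) ^ t₀ :=
      pow_le_pow_left₀ hr0 h1 t₀
    have h3 : Real.exp (-(1/(n:ℝ))) ^ t₀ = Real.exp (-((t₀ : ℝ)/(n:ℝ))) := by
      rw [← Real.exp_nat_mul]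
      congr 1
      ring
    have h4 : Real.exp (-((t₀ : ℝ)/(n:ℝ))) ≤ Real.exp (-(Real.log a)) := by
      apply Real.exp_le_exp.mpr
      rw [neg_le_neg_iff]
      rw [le_div_iff₀ hnpos]
      calc Real.log a * n = (n:ℝ) * Real.log a := by ring
        _ ≤ (t₀ : ℝ) := Nat.le_ceil _
    have h5 : Real.exp (-(Real.log a)) = a⁻¹ := by
      rw [Real.exp_neg, Real.exp_log ha0]
    have h6 : (((n:ℝ) - 1) / n) ^ t₀ ≤ a⁻¹ := by
      calc (((n:ℝ) - 1) / n) ^ t₀ ≤ Real.exp (-(1/(n:ℝ))) ^ t₀ := h2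
        _ = Real.exp (-((t₀ : ℝ)/(n:ℝ))) := h3
        _ ≤ Real.exp (-(Real.log a)) := h4
        _ = a⁻¹ := h5
    calc a * (((n:ℝ) - 1) / n) ^ t₀ ≤ a * a⁻¹ := mul_le_mul_of_nonneg_left h6 ha0.le
      _ = 1 := mul_inv_cancel₀ (ne_of_gt ha0)
  -- sum the tail
  have hgeom : (1 - ENNReal.ofReal (((n:ℝ) - 1) / n))⁻¹ = ENNReal.ofReal n := by
    have h1mr : (1:ℝ≥0∞) - ENNReal.ofReal (((n:ℝ) - 1) / n) = ENNReal.ofReal (1/(n:ℝ)) := by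
      rw [← ENNReal.ofReal_one, ← ENNReal.ofReal_sub 1 hr0]
      congr 1
      field_simp
      ring
    rw [h1mr, ← ENNReal.ofReal_inv_of_pos (by positivity : (0:ℝ) < 1/(n:ℝ))]
    congr 1
    rw [one_div, inv_inv]
  rw [expectedHittingTime]
  calc ∑' t, (run (rlsStep hn) adv (x₀, p₀) t).toOuterMeasure
          {h | ∀ c ∈ h, ¬ disc c.2 c.1 ≤ U}
      = (∑ i ∈ Finset.range t₀, (run (rlsStep hn) adv (x₀, p₀) i).toOuterMeasure
            {h | ∀ c ∈ h, ¬ disc c.2 c.1 ≤ U})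
        + ∑' i, (run (rlsStep hn) adv (x₀, p₀) (i + t₀)).toOuterMeasure
            {h | ∀ c ∈ h, ¬ disc c.2 c.1 ≤ U} :=
        (Summable.sum_add_tsum_nat_add' ENNReal.summable).symm
    _ ≤ (t₀ : ℝ≥0∞) + ENNReal.ofReal n := by
        refine add_le_add ?_ ?_
        · calc ∑ i ∈ Finset.range t₀, (run (rlsStep hn) adv (x₀, p₀) i).toOuterMeasure
                {h | ∀ c ∈ h, ¬ disc c.2 c.1 ≤ U}
              ≤ ∑ _i ∈ Finset.range t₀, (1:ℝ≥0∞) := Finset.sum_le_sum fun i _ => hq1 i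
            _ = (t₀ : ℝ≥0∞) := by simp
        · calc ∑' i, (run (rlsStep hn) adv (x₀, p₀) (i + t₀)).toOuterMeasure
                {h | ∀ c ∈ h, ¬ disc c.2 c.1 ≤ U}
              ≤ ∑' i, ENNReal.ofReal (a * (((n:ℝ) - 1) / n) ^ (i + t₀)) :=
                ENNReal.tsum_le_tsum fun i => hq2 (i + t₀)
            _ = ∑' i, ENNReal.ofReal (a * (((n:ℝ) - 1) / n) ^ t₀) *
                  ENNReal.ofReal (((n:ℝ) - 1) / n) ^ i := by
                refine tsum_congr fun i => ?_
                rw [← ENNReal.ofReal_pow hr0,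
                    ← ENNReal.ofReal_mul (by positivity : (0:ℝ) ≤ a * (((n:ℝ) - 1) / n) ^ t₀)]
                congr 1
                ring
            _ = ENNReal.ofReal (a * (((n:ℝ) - 1) / n) ^ t₀) *
                  (1 - ENNReal.ofReal (((n:ℝ) - 1) / n))⁻¹ := by
                rw [ENNReal.tsum_mul_left, ENNReal.tsum_geometric]
            _ ≤ 1 * (1 - ENNReal.ofReal (((n:ℝ) - 1) / n))⁻¹ := by
                refine mul_le_mul_left ?_ _
                rw [← ENNReal.ofReal_one]
                exact ENNReal.ofReal_le_ofReal hart
            _ = ENNReal.ofReal n := by rw [one_mul, hgeom]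
    _ ≤ ENNReal.ofReal (4 * n * (1 + min (Real.log n) (Real.log (U / L)))) := by
        rw [← ENNReal.ofReal_natCast t₀, ← ENNReal.ofReal_add (Nat.cast_nonneg t₀) (by positivity)]
        apply ENNReal.ofReal_le_ofReal
        have hm0 : 0 ≤ min (Real.log n) (Real.log (U / L)) :=
          le_min (Real.log_nonneg hn1) (Real.log_nonneg (by rw [le_div_iff₀ hL]; linarith))
        have hloga : Real.log a ≤ Real.log 2 + min (Real.log n) (Real.log (U / L)) := by
          have h2n : Real.log a ≤ Real.log 2 + Real.log n := by
            calc Real.log a ≤ Real.log (2 * n) := Real.log_le_log ha0 ha2n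
              _ = Real.log 2 + Real.log n := Real.log_mul (by norm_num) (by linarith)
          have h2R : Real.log a ≤ Real.log 2 + Real.log (U / L) := by
            calc Real.log a ≤ Real.log (2 * (U / L)) := Real.log_le_log ha0 ha2R
              _ = Real.log 2 + Real.log (U / L) := Real.log_mul (by norm_num) (by positivity)
          rcases le_total (Real.log n) (Real.log (U / L)) with hc | hc
          · rw [min_eq_left hc]; exact h2n
          · rw [min_eq_right hc]; exact h2R
        have ht₀ : (t₀ : ℝ) ≤ (n:ℝ) * Real.log a + 1 := by
          have := Nat.ceil_lt_add_one (by positivity : (0:ℝ) ≤ (n:ℝ) * Real.log a)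
          exact le_of_lt this
        have hlog2 : Real.log 2 ≤ 1 := by
          have := Real.log_le_sub_one_of_pos (by norm_num : (0:ℝ) < 2)
          linarith
        nlinarith [mul_le_mul_of_nonneg_left hloga hnpos.le,
          mul_le_mul_of_nonneg_left hlog2 hnpos.le,
          mul_nonneg hnpos.le hm0, ht₀, hn1, hm0]

end MakespanDyn
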